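/- arXiv:2006.14369 — 2 statements merged into one kernel-verified Lean document; each statement's English description precedes it below -/
import Mathlib

section
/- Let M be a compact metric space, φ a continuous flow on M, and H ⊆ M a compact invariant set. Then H has the strong finite pseudo-orbit tracing property (SFPOTP) if and only if for every ε > 0 and every T > 0 there exists δ > 0 such that every finite (δ,T)-chain of H is strongly ε-traced by some point of M. -/
/-- Partial time sums of a bi-infinite chain: `S 0 = 0`, `S i = t 0 + ⋯ + t (i-1)` for `i > 0`,
and `S i = -(t (-1) + ⋯ + t i)` for `i < 0`. -/
noncomputable def chainS (t : ℤ → ℝ) (i : ℤ) : ℝ :=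
  if 0 ≤ i then ∑ j ∈ Finset.range i.toNat, t (j : ℤ)
  else -∑ j ∈ Finset.range (-i).toNat, t (-((j : ℤ) + 1))

/-- Partial time sums of a finite chain: `S 0 = 0`, `S i = t 0 + ⋯ + t (i-1)`. -/
noncomputable def finChainS (t : ℕ → ℝ) (i : ℕ) : ℝ := ∑ j ∈ Finset.range i, t j

/-- `g` is a reparametrization: continuous, strictly increasing, `g 0 = 0`. -/
def IsRep (g : ℝ → ℝ) : Prop := Continuous g ∧ StrictMono g ∧ g 0 = 0

/-- `g` is a surjective reparametrization (the class `Rep*`). -/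
def IsRepStar (g : ℝ → ℝ) : Prop := IsRep g ∧ Function.Surjective g

/-- The class `Rep(ε)`: surjective reparametrizations whose difference quotients are
ε-close to 1. -/
def IsRepEps (ε : ℝ) (g : ℝ → ℝ) : Prop :=
  IsRepStar g ∧ ∀ s t : ℝ, s ≠ t → |(g s - g t) / (s - t) - 1| ≤ ε

variable {M : Type*} [MetricSpace M]

/-- `{x i ; t i}_{i ∈ ℤ}` is a (bi-infinite) `(δ,T)`-chain of `H` for the flow `φ`. -/
def IsChainDT (φ : ℝ → M → M) (H : Set M) (δ T : ℝ) (x : ℤ → M) (t : ℤ → ℝ) : Prop :=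
  (∀ i, x i ∈ H) ∧ (∀ i, T ≤ t i) ∧ ∀ i, dist (φ (t i) (x i)) (x (i + 1)) ≤ δ

/-- `{x i ; t i}_{i = 0}^{k}` is a finite `(δ,T)`-chain of `H` for the flow `φ`. -/
def IsFinChainDT (φ : ℝ → M → M) (H : Set M) (δ T : ℝ) (k : ℕ) (x : ℕ → M) (t : ℕ → ℝ) :
    Prop :=
  (∀ i ≤ k, x i ∈ H) ∧ (∀ i ≤ k, T ≤ t i) ∧ ∀ i < k, dist (φ (t i) (x i)) (x (i + 1)) ≤ δ

/-- The chain trajectory `x₀ * s = φ (s - S i) (x i)` (for `S i ≤ s < S (i+1)`) of a bi-infinite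
chain is ε-close, for all real times `s`, to the `g`-reparametrized orbit of `z`. -/
def TracedVia (φ : ℝ → M → M) (ε : ℝ) (x : ℤ → M) (t : ℤ → ℝ) (g : ℝ → ℝ) (z : M) : Prop :=
  ∀ i : ℤ, ∀ s : ℝ, chainS t i ≤ s → s < chainS t (i + 1) →
    dist (φ (s - chainS t i) (x i)) (φ (g s) z) ≤ ε

/-- The chain trajectory of a finite chain is ε-close, for all times `s ∈ [0, S (k+1)]`,
to the `g`-reparametrized orbit of `z`. -/
def FinTracedVia (φ : ℝ → M → M) (ε : ℝ) (k : ℕ) (x : ℕ → M) (t : ℕ → ℝ)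
    (g : ℝ → ℝ) (z : M) : Prop :=
  (∀ i ≤ k, ∀ s : ℝ, finChainS t i ≤ s → s < finChainS t (i + 1) →
    dist (φ (s - finChainS t i) (x i)) (φ (g s) z) ≤ ε) ∧
  dist (φ (t k) (x k)) (φ (g (finChainS t (k + 1))) z) ≤ ε

/-- Weak pseudo-orbit tracing property. -/
def WPOTP (φ : ℝ → M → M) (H : Set M) : Prop :=
  ∀ ε > (0 : ℝ), ∃ δ > (0 : ℝ), ∃ T > (0 : ℝ), ∀ x t, IsChainDT φ H δ T x t →
    ∃ z : M, ∃ g : ℝ → ℝ, IsRep g ∧ TracedVia φ ε x t g z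

/-- Normal pseudo-orbit tracing property. -/
def NPOTP (φ : ℝ → M → M) (H : Set M) : Prop :=
  ∀ ε > (0 : ℝ), ∃ δ > (0 : ℝ), ∃ T > (0 : ℝ), ∀ x t, IsChainDT φ H δ T x t →
    ∃ z : M, ∃ g : ℝ → ℝ, IsRepStar g ∧ TracedVia φ ε x t g z

/-- Strong pseudo-orbit tracing property. -/
def SPOTP (φ : ℝ → M → M) (H : Set M) : Prop :=
  ∀ ε > (0 : ℝ), ∃ δ > (0 : ℝ), ∃ T > (0 : ℝ), ∀ x t, IsChainDT φ H δ T x t →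
    ∃ z : M, ∃ g : ℝ → ℝ, IsRepEps ε g ∧ TracedVia φ ε x t g z

/-- Finite pseudo-orbit tracing property. -/
def FPOTP (φ : ℝ → M → M) (H : Set M) : Prop :=
  ∀ ε > (0 : ℝ), ∃ δ > (0 : ℝ), ∃ T > (0 : ℝ), ∀ k x t, IsFinChainDT φ H δ T k x t →
    ∃ z : M, ∃ g : ℝ → ℝ, IsRep g ∧ FinTracedVia φ ε k x t g z

/-- Strong finite pseudo-orbit tracing property. -/
def SFPOTP (φ : ℝ → M → M) (H : Set M) : Prop :=
  ∀ ε > (0 : ℝ), ∃ δ > (0 : ℝ), ∃ T > (0 : ℝ), ∀ k x t, IsFinChainDT φ H δ T k x t →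
    ∃ z : M, ∃ g : ℝ → ℝ, IsRepEps ε g ∧ FinTracedVia φ ε k x t g z


section MyHelpers

variable {M : Type*} [MetricSpace M]

lemma myFinChainS_zero (t : ℕ → ℝ) : finChainS t 0 = 0 := by simp [finChainS]

lemma myFinChainS_succ (t : ℕ → ℝ) (i : ℕ) :
    finChainS t (i + 1) = finChainS t i + t i := Finset.sum_range_succ _ _

lemma myFinChainS_add_ge (t : ℕ → ℝ) (T : ℝ) (ht : ∀ i, T ≤ t i) (a j : ℕ) :
    finChainS t a + (j : ℝ) * T ≤ finChainS t (a + j) := by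
  induction j with
  | zero => simp
  | succ j ih =>
    have h := ht (a + j)
    rw [show a + (j + 1) = (a + j) + 1 by ring, myFinChainS_succ]
    push_cast
    push_cast at ih
    linarith

lemma myFinChainS_mono (t : ℕ → ℝ) (T : ℝ) (hT : 0 ≤ T) (ht : ∀ i, T ≤ t i)
    {i j : ℕ} (hij : i ≤ j) : finChainS t i ≤ finChainS t j := by
  have h := myFinChainS_add_ge t T ht i (j - i)
  rw [Nat.add_sub_cancel' hij] at h
  have : (0 : ℝ) ≤ ((j - i : ℕ) : ℝ) * T := mul_nonneg (by positivity) hT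
  linarith

lemma myFinChainS_nonneg (t : ℕ → ℝ) (T : ℝ) (hT : 0 ≤ T) (ht : ∀ i, T ≤ t i) (i : ℕ) :
    0 ≤ finChainS t i := by
  have := myFinChainS_mono t T hT ht (Nat.zero_le i)
  simpa [myFinChainS_zero] using this

lemma myExists_index (t : ℕ → ℝ) (n : ℕ) (σ : ℝ) (h0 : 0 ≤ σ)
    (h1 : σ < finChainS t (n + 1)) :
    ∃ p ≤ n, finChainS t p ≤ σ ∧ σ < finChainS t (p + 1) := by
  induction n with
  | zero => exact ⟨0, le_refl _, by simpa [myFinChainS_zero] using h0, h1⟩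
  | succ n ih =>
    by_cases h : σ < finChainS t (n + 1)
    · obtain ⟨p, hp, h2, h3⟩ := ih h
      exact ⟨p, hp.trans (Nat.le_succ _), h2, h3⟩
    · exact ⟨n + 1, le_refl _, not_lt.1 h, h1⟩

/-- Iterated-modulus estimate at the left endpoint of step `p + n`. -/
lemma myWindowW1 (φ : ℝ → M → M)
    (hflow_add : ∀ s t : ℝ, ∀ x : M, φ (s + t) x = φ s (φ t x))
    (T T₀ : ℝ) (hT : 0 < T)
    (β : ℕ → ℝ) (N : ℕ)
    (hβpos : ∀ j, 0 < β j)
    (hβle : ∀ i j, i ≤ j → β j ≤ β i)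
    (hβhalf : ∀ j, β (j + 1) ≤ β j / 2)
    (hβmod : ∀ j, ∀ p q : M, dist p q ≤ β (j + 1) → ∀ r, 0 ≤ r → r ≤ T₀ →
      dist (φ r p) (φ r q) ≤ β j / 2)
    (k' : ℕ) (x' : ℕ → M) (t' : ℕ → ℝ)
    (ht' : ∀ i, T ≤ t' i)
    (hd : ∀ i < k', dist (φ (t' i) (x' i)) (x' (i + 1)) ≤ β (N + 1)) :
    ∀ n, 1 ≤ n → n ≤ N + 1 → ∀ p, p + n ≤ k' → ∀ a,
      finChainS t' p ≤ a → a < finChainS t' (p + 1) →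
      finChainS t' (p + n) - a ≤ T₀ →
      dist (φ (finChainS t' (p + n) - a) (φ (a - finChainS t' p) (x' p))) (x' (p + n))
        ≤ β (N + 1 - n) := by
  have flow2 : ∀ u v : ℝ, ∀ w : M, φ u (φ v w) = φ (u + v) w :=
    fun u v w => (hflow_add u v w).symm
  intro n hn
  induction n, hn using Nat.le_induction with
  | base =>
    intro _ p hp a ha1 ha2 ha3
    have hcomp : φ (finChainS t' (p + 1) - a) (φ (a - finChainS t' p) (x' p))
        = φ (t' p) (x' p) := by
      simp only [flow2]
      congr 1
      rw [myFinChainS_succ]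
      ring
    rw [hcomp]
    have := hd p (by omega)
    calc dist (φ (t' p) (x' p)) (x' (p + 1)) ≤ β (N + 1) := this
      _ ≤ β (N + 1 - 1) := hβle _ _ (by omega)
  | succ n hn1 ih =>
    intro hnN p hp a ha1 ha2 ha3
    have hnN' : n ≤ N := by omega
    set A := φ (finChainS t' (p + n) - a) (φ (a - finChainS t' p) (x' p)) with hA
    have hmono : finChainS t' (p + n) ≤ finChainS t' (p + n + 1) :=
      myFinChainS_mono t' T hT.le ht' (Nat.le_succ _)
    have hS1 : finChainS t' (p + 1) ≤ finChainS t' (p + n) :=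
      myFinChainS_mono t' T hT.le ht' (by omega)
    have ha3' : finChainS t' (p + n + 1) - a ≤ T₀ := ha3
    have ih' : dist A (x' (p + n)) ≤ β (N + 1 - n) := by
      apply ih (by omega) p (by omega) a ha1 ha2
      linarith
    have htb0 : 0 ≤ t' (p + n) := le_trans hT.le (ht' _)
    have htb1 : t' (p + n) ≤ T₀ := by
      have hsucc : finChainS t' (p + n + 1) = finChainS t' (p + n) + t' (p + n) :=
        myFinChainS_succ _ _
      have : a ≤ finChainS t' (p + n) := le_trans ha2.le hS1
      have h4 : finChainS t' (p + n + 1) - a ≤ T₀ := ha3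
      rw [hsucc] at h4
      linarith
    have hcomp : φ (finChainS t' (p + (n + 1)) - a) (φ (a - finChainS t' p) (x' p))
        = φ (t' (p + n)) A := by
      rw [hA]
      simp only [flow2]
      congr 1
      rw [show p + (n + 1) = (p + n) + 1 from rfl, myFinChainS_succ]
      ring
    rw [hcomp]
    have hmod : dist (φ (t' (p + n)) A) (φ (t' (p + n)) (x' (p + n))) ≤ β (N - n) / 2 := by
      apply hβmod (N - n) _ _ _ _ htb0 htb1
      have : N - n + 1 = N + 1 - n := by omega
      rw [this]
      exact ih'
    have hjump : dist (φ (t' (p + n)) (x' (p + n))) (x' (p + n + 1)) ≤ β (N - n) / 2 := by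
      calc dist (φ (t' (p + n)) (x' (p + n))) (x' (p + n + 1)) ≤ β (N + 1) :=
            hd (p + n) (by omega)
        _ ≤ β (N - n + 1) := hβle _ _ (by omega)
        _ ≤ β (N - n) / 2 := hβhalf _
    have : N + 1 - (n + 1) = N - n := by omega
    rw [this, show p + (n + 1) = p + n + 1 by ring]
    calc dist (φ (t' (p + n)) A) (x' (p + n + 1))
        ≤ dist (φ (t' (p + n)) A) (φ (t' (p + n)) (x' (p + n)))
          + dist (φ (t' (p + n)) (x' (p + n))) (x' (p + n + 1)) := dist_triangle _ _ _
      _ ≤ β (N - n) / 2 + β (N - n) / 2 := add_le_add hmod hjump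
      _ = β (N - n) := by ring

/-- Main window estimate: flowing the chain trajectory value at time `a` for duration
`σ - a ≤ T₀` lands within `β 0 / 2` of the chain trajectory value at time `σ`. -/
lemma myWindowMain (φ : ℝ → M → M)
    (hflow_add : ∀ s t : ℝ, ∀ x : M, φ (s + t) x = φ s (φ t x))
    (T T₀ : ℝ) (hT : 0 < T) (hT₀ : 0 < T₀)
    (β : ℕ → ℝ) (N : ℕ) (hN : T₀ / T ≤ (N : ℝ))
    (hβpos : ∀ j, 0 < β j)
    (hβle : ∀ i j, i ≤ j → β j ≤ β i)
    (hβhalf : ∀ j, β (j + 1) ≤ β j / 2)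
    (hβmod : ∀ j, ∀ p q : M, dist p q ≤ β (j + 1) → ∀ r, 0 ≤ r → r ≤ T₀ →
      dist (φ r p) (φ r q) ≤ β j / 2)
    (k' : ℕ) (x' : ℕ → M) (t' : ℕ → ℝ)
    (ht' : ∀ i, T ≤ t' i)
    (hd : ∀ i < k', dist (φ (t' i) (x' i)) (x' (i + 1)) ≤ β (N + 1)) :
    ∀ p q, q ≤ k' → ∀ a σ, finChainS t' p ≤ a → a < finChainS t' (p + 1) →
      finChainS t' q ≤ σ → σ < finChainS t' (q + 1) → a ≤ σ → σ - a ≤ T₀ →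
      dist (φ (σ - a) (φ (a - finChainS t' p) (x' p))) (φ (σ - finChainS t' q) (x' q))
        ≤ β 0 / 2 := by
  have flow2 : ∀ u v : ℝ, ∀ w : M, φ u (φ v w) = φ (u + v) w :=
    fun u v w => (hflow_add u v w).symm
  intro p q hq a σ ha1 ha2 hσ1 hσ2 haσ hwin
  have hpq : p ≤ q := by
    by_contra hcon
    push_neg at hcon
    have : finChainS t' (q + 1) ≤ finChainS t' p :=
      myFinChainS_mono t' T hT.le ht' (by omega)
    linarith
  obtain ⟨n, rfl⟩ : ∃ n, q = p + n := ⟨q - p, by omega⟩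
  rcases Nat.eq_zero_or_pos n with hn0 | hn1
  · subst hn0
    have hcomp : φ (σ - a) (φ (a - finChainS t' p) (x' p))
        = φ (σ - finChainS t' (p + 0)) (x' (p + 0)) := by
      simp only [flow2]
      congr 1
      simp only [Nat.add_zero]
      ring
    rw [hcomp, dist_self]
    linarith [hβpos 0]
  · -- n ≥ 1
    have hnN : n ≤ N := by
      have h := myFinChainS_add_ge t' T ht' (p + 1) (n - 1)
      rw [show p + 1 + (n - 1) = p + n by omega] at h
      have h2 : ((n - 1 : ℕ) : ℝ) * T < T₀ := by
        have : finChainS t' (p + n) ≤ σ := hσ1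
        linarith
      have h3 : ((n - 1 : ℕ) : ℝ) < T₀ / T := by
        rw [lt_div_iff₀ hT]
        exact h2
      have h4 : ((n - 1 : ℕ) : ℝ) < (N : ℝ) := lt_of_lt_of_le h3 hN
      have := Nat.cast_lt.mp h4
      omega
    have hW1 := myWindowW1 φ hflow_add T T₀ hT β N hβpos hβle hβhalf hβmod k' x' t' ht' hd
      n hn1 (by omega) p hq a ha1 ha2 (by linarith)
    set B := φ (finChainS t' (p + n) - a) (φ (a - finChainS t' p) (x' p)) with hB
    have hcomp : φ (σ - a) (φ (a - finChainS t' p) (x' p))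
        = φ (σ - finChainS t' (p + n)) B := by
      rw [hB]
      simp only [flow2]
      congr 1
      ring
    rw [hcomp]
    have hr0 : 0 ≤ σ - finChainS t' (p + n) := by linarith
    have hS1 : finChainS t' (p + 1) ≤ finChainS t' (p + n) :=
      myFinChainS_mono t' T hT.le ht' (by omega)
    have hr1 : σ - finChainS t' (p + n) ≤ T₀ := by linarith
    have hmod : dist (φ (σ - finChainS t' (p + n)) B)
        (φ (σ - finChainS t' (p + n)) (x' (p + n))) ≤ β (N - n) / 2 := by
      apply hβmod (N - n) _ _ _ _ hr0 hr1
      have : N - n + 1 = N + 1 - n := by omega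
      rw [this]
      exact hW1
    calc dist (φ (σ - finChainS t' (p + n)) B) (φ (σ - finChainS t' (p + n)) (x' (p + n)))
        ≤ β (N - n) / 2 := hmod
      _ ≤ β 0 / 2 := by linarith [hβle 0 (N - n) (Nat.zero_le _)]

end MyHelpers

theorem sfpotp_iff_uniform_in_T {M : Type*} [MetricSpace M] [CompactSpace M]
    (φ : ℝ → M → M)
    (hflow_cont : Continuous fun p : ℝ × M => φ p.1 p.2)
    (hflow_zero : ∀ x : M, φ 0 x = x)
    (hflow_add : ∀ s t : ℝ, ∀ x : M, φ (s + t) x = φ s (φ t x))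
    (H : Set M) (hHcomp : IsCompact H) (hHinv : ∀ τ : ℝ, φ τ '' H = H) :
    SFPOTP φ H ↔
      ∀ ε > (0 : ℝ), ∀ T > (0 : ℝ), ∃ δ > (0 : ℝ), ∀ k x t, IsFinChainDT φ H δ T k x t →
        ∃ z : M, ∃ g : ℝ → ℝ, IsRepEps ε g ∧ FinTracedVia φ ε k x t g z := by
  constructor
  · intro hS ε hε T hT
    obtain ⟨δ₀, hδ₀, T₀, hT₀, htrace⟩ := hS (ε / 2) (by linarith)
    have himg : ∀ r : ℝ, ∀ z ∈ H, φ r z ∈ H := by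
      intro r z hz
      rw [← hHinv r]
      exact Set.mem_image_of_mem _ hz
    -- a uniform continuity modulus for the flow on time window [0, T₀]
    have ucont : ∀ η : ℝ, 0 < η → ∃ α, 0 < α ∧ α ≤ η / 2 ∧ ∀ p q : M, dist p q ≤ α →
        ∀ r : ℝ, 0 ≤ r → r ≤ T₀ → dist (φ r p) (φ r q) ≤ η / 2 := by
      intro η hη
      have hK : IsCompact (Set.Icc (0 : ℝ) T₀ ×ˢ (Set.univ : Set M)) :=
        isCompact_Icc.prod isCompact_univ
      have huc := hK.uniformContinuousOn_of_continuous hflow_cont.continuousOn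
      rw [Metric.uniformContinuousOn_iff] at huc
      obtain ⟨d, hd0, hball⟩ := huc (η / 2) (by linarith)
      refine ⟨min (d / 2) (η / 2), by positivity, min_le_right _ _, ?_⟩
      intro p q hpq r hr0 hr1
      have h1 : ((r, p) : ℝ × M) ∈ Set.Icc (0 : ℝ) T₀ ×ˢ (Set.univ : Set M) :=
        ⟨⟨hr0, hr1⟩, trivial⟩
      have h2 : ((r, q) : ℝ × M) ∈ Set.Icc (0 : ℝ) T₀ ×ˢ (Set.univ : Set M) :=
        ⟨⟨hr0, hr1⟩, trivial⟩
      have hdist : dist ((r, p) : ℝ × M) ((r, q) : ℝ × M) = dist p q := by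
        rw [Prod.dist_eq, dist_self]
        exact max_eq_right dist_nonneg
      have := hball _ h1 _ h2 (by
        rw [hdist]
        calc dist p q ≤ min (d / 2) (η / 2) := hpq
          _ ≤ d / 2 := min_le_left _ _
          _ < d := by linarith)
      exact this.le
    -- the decreasing sequence of moduli
    set β0 : ℝ := min δ₀ (ε / 2) with hβ0def
    have hβ0pos : 0 < β0 := lt_min hδ₀ (by linarith)
    set β : ℕ → ℝ := fun n => Nat.rec β0
      (fun _ prev => if h : 0 < prev then (ucont prev h).choose else 1) n with hβdef
    have hβzero : β 0 = β0 := rfl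
    have hβsucc : ∀ j, β (j + 1) = if h : 0 < β j then (ucont (β j) h).choose else 1 :=
      fun j => rfl
    have hβpos : ∀ j, 0 < β j := by
      intro j
      induction j with
      | zero => exact hβ0pos
      | succ j ih =>
        rw [hβsucc j, dif_pos ih]
        exact (ucont (β j) ih).choose_spec.1
    have hβhalf : ∀ j, β (j + 1) ≤ β j / 2 := by
      intro j
      rw [hβsucc j, dif_pos (hβpos j)]
      exact (ucont (β j) (hβpos j)).choose_spec.2.1
    have hβmod : ∀ j, ∀ p q : M, dist p q ≤ β (j + 1) → ∀ r, 0 ≤ r → r ≤ T₀ →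
        dist (φ r p) (φ r q) ≤ β j / 2 := by
      intro j p q hpq
      rw [hβsucc j, dif_pos (hβpos j)] at hpq
      exact (ucont (β j) (hβpos j)).choose_spec.2.2 p q hpq
    have hβle : ∀ i j, i ≤ j → β j ≤ β i := by
      intro i j hij
      induction j with
      | zero =>
        have : i = 0 := Nat.le_zero.mp hij
        subst this; exact le_refl _
      | succ j ih =>
        rcases Nat.lt_or_ge i (j + 1) with h | h
        · have h1 := ih (by omega)
          have h2 := hβhalf j
          have h3 := hβpos j
          linarith
        · have : i = j + 1 := by omega
          subst this; exact le_refl _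
    set N : ℕ := ⌈T₀ / T⌉₊ with hNdef
    refine ⟨β (N + 1), hβpos (N + 1), ?_⟩
    intro k x t hch
    obtain ⟨hx, ht, hd⟩ := hch
    set m : ℕ := ⌈finChainS t (k + 1) / T₀⌉₊ with hmdef
    have hm : finChainS t (k + 1) ≤ (m : ℝ) * T₀ := by
      have h1 : finChainS t (k + 1) / T₀ ≤ (m : ℝ) := Nat.le_ceil _
      calc finChainS t (k + 1) = finChainS t (k + 1) / T₀ * T₀ := by field_simp
        _ ≤ (m : ℝ) * T₀ := mul_le_mul_of_nonneg_right h1 hT₀.le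
    obtain ⟨n₀, hn₀⟩ := exists_nat_gt (((m : ℝ) + 1) * T₀ / T)
    set k' : ℕ := max (k + 1) n₀ with hk'def
    have hk'ge : k + 1 ≤ k' := le_max_left _ _
    -- padded chain
    set t' : ℕ → ℝ := fun i => if i ≤ k then t i else T with ht'def
    set x' : ℕ → M := fun i => if i ≤ k then x i
      else φ ((↑(i - (k + 1)) : ℝ) * T + t k) (x k) with hx'def
    have ht'eq : ∀ i ≤ k, t' i = t i := fun i h => by simp only [ht'def, if_pos h]
    have hx'eq : ∀ i ≤ k, x' i = x i := fun i h => by simp only [hx'def, if_pos h]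
    have ht' : ∀ i, T ≤ t' i := by
      intro i
      by_cases h : i ≤ k
      · rw [ht'eq i h]; exact ht i h
      · simp only [ht'def, if_neg h]
        exact le_rfl
    have hx' : ∀ i, x' i ∈ H := by
      intro i
      by_cases h : i ≤ k
      · rw [hx'eq i h]; exact hx i h
      · simp only [hx'def, if_neg h]
        exact himg _ _ (hx k le_rfl)
    have hx'succ : x' (k + 1) = φ (t k) (x k) := by
      simp only [hx'def, if_neg (by omega : ¬ k + 1 ≤ k)]
      norm_num
    have hd' : ∀ i, dist (φ (t' i) (x' i)) (x' (i + 1)) ≤ β (N + 1) := by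
      intro i
      rcases lt_trichotomy i k with h | h | h
      · rw [ht'eq i h.le, hx'eq i h.le, hx'eq (i + 1) (by omega)]
        exact hd i h
      · subst h
        rw [ht'eq i le_rfl, hx'eq i le_rfl, hx'succ, dist_self]
        exact (hβpos (N + 1)).le
      · have hni : ¬ i ≤ k := by omega
        have hni1 : ¬ i + 1 ≤ k := by omega
        have e1 : t' i = T := by simp only [ht'def, if_neg hni]
        have e2 : x' i = φ ((↑(i - (k + 1)) : ℝ) * T + t k) (x k) := by
          simp only [hx'def, if_neg hni]
        have e3 : x' (i + 1) = φ ((↑(i + 1 - (k + 1)) : ℝ) * T + t k) (x k) := by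
          simp only [hx'def, if_neg hni1]
        rw [e1, e2, e3, ← hflow_add]
        have e4 : T + ((↑(i - (k + 1)) : ℝ) * T + t k)
            = (↑(i + 1 - (k + 1)) : ℝ) * T + t k := by
          have hc : (i + 1 - (k + 1) : ℕ) = (i - (k + 1)) + 1 := by omega
          rw [hc]
          push_cast
          ring
        rw [e4, dist_self]
        exact (hβpos (N + 1)).le
    have hSS : ∀ i ≤ k + 1, finChainS t' i = finChainS t i := by
      intro i hi
      show (∑ j ∈ Finset.range i, t' j) = ∑ j ∈ Finset.range i, t j
      apply Finset.sum_congr rfl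
      intro j hj
      have hjk : j ≤ k := by
        have := Finset.mem_range.mp hj
        omega
      exact ht'eq j hjk
    have hS'ge : ∀ nn : ℕ, (nn : ℝ) * T ≤ finChainS t' nn := by
      intro nn
      have h := myFinChainS_add_ge t' T ht' 0 nn
      simpa [myFinChainS_zero] using h
    have hS'big : ((m : ℝ) + 1) * T₀ < finChainS t' (k' + 1) := by
      rw [div_lt_iff₀ hT] at hn₀
      have h2 : (n₀ : ℝ) * T ≤ ((k' + 1 : ℕ) : ℝ) * T := by
        have hc : (n₀ : ℝ) ≤ ((k' + 1 : ℕ) : ℝ) := by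
          exact_mod_cast le_trans (le_max_right (k + 1) n₀) (Nat.le_succ _)
        exact mul_le_mul_of_nonneg_right hc hT.le
      linarith [hS'ge (k' + 1)]
    have hPex : ∀ j : ℕ, ∃ p, p ≤ k' ∧ (j ≤ m →
        finChainS t' p ≤ (j : ℝ) * T₀ ∧ (j : ℝ) * T₀ < finChainS t' (p + 1)) := by
      intro j
      by_cases hj : j ≤ m
      · have h0 : (0 : ℝ) ≤ (j : ℝ) * T₀ := by positivity
        have h1 : (j : ℝ) * T₀ < finChainS t' (k' + 1) := by
          have hc : (j : ℝ) ≤ (m : ℝ) := by exact_mod_cast hj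
          nlinarith
        obtain ⟨p, hp1, hp2, hp3⟩ := myExists_index t' k' _ h0 h1
        exact ⟨p, hp1, fun _ => ⟨hp2, hp3⟩⟩
      · exact ⟨0, Nat.zero_le _, fun h => absurd h hj⟩
    choose P hPk hPspec using hPex
    set y : ℕ → M := fun j => φ ((j : ℝ) * T₀ - finChainS t' (P j)) (x' (P j)) with hydef
    have hNle : T₀ / T ≤ (N : ℝ) := Nat.le_ceil _
    have WM := myWindowMain φ hflow_add T T₀ hT hT₀ β N hNle hβpos hβle hβhalf hβmod
      k' x' t' ht' (fun i _ => hd' i)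
    have hβ0δ : β 0 ≤ δ₀ := by rw [hβzero]; exact min_le_left _ _
    have hβ0ε : β 0 ≤ ε / 2 := by rw [hβzero]; exact min_le_right _ _
    -- the grouped chain is a (δ₀, T₀)-chain
    have hgc : IsFinChainDT φ H δ₀ T₀ m y (fun _ => T₀) := by
      refine ⟨fun j _ => ?_, fun j _ => le_rfl, fun j hj => ?_⟩
      · exact himg _ _ (hx' _)
      · show dist (φ T₀ (y j)) (y (j + 1)) ≤ δ₀
        obtain ⟨ha1, ha2⟩ := hPspec j hj.le
        obtain ⟨hb1, hb2⟩ := hPspec (j + 1) hj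
        have hcast : ((j + 1 : ℕ) : ℝ) * T₀ - (j : ℝ) * T₀ = T₀ := by push_cast; ring
        have h := WM (P j) (P (j + 1)) (hPk (j + 1)) ((j : ℝ) * T₀) (((j + 1 : ℕ) : ℝ) * T₀)
          ha1 ha2 hb1 hb2
          (by
            have : ((j : ℕ) : ℝ) ≤ ((j + 1 : ℕ) : ℝ) := by exact_mod_cast Nat.le_succ j
            exact mul_le_mul_of_nonneg_right this hT₀.le)
          (le_of_eq hcast)
        rw [hcast] at h
        simp only [hydef]
        exact h.trans (by linarith [hβpos 0])
    obtain ⟨z, g, hg, htr⟩ := htrace m y (fun _ => T₀) hgc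
    have hconstS : ∀ j : ℕ, finChainS (fun _ => T₀) j = (j : ℝ) * T₀ := by
      intro j
      show (∑ _x ∈ Finset.range j, T₀) = (j : ℝ) * T₀
      rw [Finset.sum_const, Finset.card_range, nsmul_eq_mul]
    -- the combined tracing estimate
    have hclaim : ∀ i σ, i ≤ k + 1 → finChainS t' i ≤ σ → σ < finChainS t' (i + 1) →
        σ ≤ (m : ℝ) * T₀ → dist (φ (σ - finChainS t' i) (x' i)) (φ (g σ) z) ≤ ε := by
      intro i σ hik hσ1 hσ2 hσm
      have hσ0 : 0 ≤ σ := le_trans (myFinChainS_nonneg t' T hT.le ht' i) hσ1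
      set j : ℕ := ⌊σ / T₀⌋₊ with hjdef
      have hj1 : (j : ℝ) * T₀ ≤ σ := by
        have h := Nat.floor_le (R := ℝ) (a := σ / T₀) (by positivity)
        calc (j : ℝ) * T₀ ≤ σ / T₀ * T₀ := mul_le_mul_of_nonneg_right h hT₀.le
          _ = σ := by field_simp
      have hj2 : σ < ((j : ℝ) + 1) * T₀ := by
        have h := Nat.lt_floor_add_one (σ / T₀)
        calc σ = σ / T₀ * T₀ := by field_simp
          _ < ((j : ℝ) + 1) * T₀ := mul_lt_mul_of_pos_right h hT₀
      have hjm : j ≤ m := by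
        have h1 : σ / T₀ ≤ (m : ℝ) := by rw [div_le_iff₀ hT₀]; exact hσm
        have h2 : (j : ℝ) ≤ (m : ℝ) := le_trans (Nat.floor_le (by positivity)) h1
        exact_mod_cast h2
      obtain ⟨hp1, hp2⟩ := hPspec j hjm
      have h1 := htr.1 j hjm σ (by rw [hconstS]; exact hj1)
        (by rw [hconstS]; push_cast; exact hj2)
      have h2 := WM (P j) i (by omega) ((j : ℝ) * T₀) σ hp1 hp2 hσ1 hσ2 hj1 (by linarith)
      rw [hconstS] at h1
      have e : y j = φ ((j : ℝ) * T₀ - finChainS t' (P j)) (x' (P j)) := by rw [hydef]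
      rw [e] at h1
      calc dist (φ (σ - finChainS t' i) (x' i)) (φ (g σ) z)
          ≤ dist (φ (σ - finChainS t' i) (x' i))
              (φ (σ - (j : ℝ) * T₀) (φ ((j : ℝ) * T₀ - finChainS t' (P j)) (x' (P j))))
            + dist (φ (σ - (j : ℝ) * T₀) (φ ((j : ℝ) * T₀ - finChainS t' (P j)) (x' (P j))))
              (φ (g σ) z) := dist_triangle _ _ _
        _ ≤ β 0 / 2 + ε / 2 := add_le_add (by rw [dist_comm]; exact h2) h1
        _ ≤ ε := by linarith [hβpos 0]
    refine ⟨z, g, ⟨hg.1, fun s₁ s₂ hs => le_trans (hg.2 s₁ s₂ hs) (by linarith)⟩, ?_, ?_⟩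
    · intro i hi σ h1 h2
      have e1 : finChainS t i = finChainS t' i := (hSS i (by omega)).symm
      have e2 : finChainS t (i + 1) = finChainS t' (i + 1) := (hSS (i + 1) (by omega)).symm
      have e3 : x i = x' i := (hx'eq i hi).symm
      rw [e1, e3]
      rw [e1] at h1
      rw [e2] at h2
      apply hclaim i σ (by omega) h1 h2
      have h3 : finChainS t' (i + 1) ≤ finChainS t' (k + 1) :=
        myFinChainS_mono t' T hT.le ht' (by omega)
      have e4 : finChainS t' (k + 1) = finChainS t (k + 1) := hSS _ le_rfl
      linarith [hm, e4 ▸ h3]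
    · have e0 : finChainS t (k + 1) = finChainS t' (k + 1) := (hSS _ le_rfl).symm
      rw [e0]
      have e1 : φ (t k) (x k)
          = φ (finChainS t' (k + 1) - finChainS t' (k + 1)) (x' (k + 1)) := by
        rw [sub_self, hflow_zero, hx'succ]
      rw [e1]
      refine hclaim (k + 1) (finChainS t' (k + 1)) le_rfl le_rfl ?_ ?_
      · have h1 := myFinChainS_succ t' (k + 1)
        have h2 := ht' (k + 1)
        linarith
      · rw [hSS _ le_rfl]
        exact hm
  · intro h ε hε
    obtain ⟨δ, hδ, hδ'⟩ := h ε hε 1 one_pos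
    exact ⟨δ, hδ, 1, one_pos, hδ'⟩
end

section
/- Let M be a compact metric space, φ a continuous flow on M, and H ⊆ M a nonsingular compact invariant set (H contains no fixed point of φ). If H has the weak pseudo-orbit tracing property (WPOTP), then H has the strong pseudo-orbit tracing property (SPOTP). -/
variable {M : Type*} [MetricSpace M]

lemma chainS_zero (t : ℤ → ℝ) : chainS t 0 = 0 := by simp [chainS]

lemma chainS_succ (t : ℤ → ℝ) (i : ℤ) : chainS t (i + 1) = chainS t i + t i := by
  rcases le_or_gt 0 i with hi | hi
  · have hi1 : (0:ℤ) ≤ i + 1 := by omega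
    have hn : (i+1).toNat = i.toNat + 1 := by omega
    rw [chainS, chainS, if_pos hi1, if_pos hi, hn, Finset.sum_range_succ]
    congr 2
    omega
  · rcases eq_or_lt_of_le (by omega : i + 1 ≤ 0) with h0 | hneg
    · have hi' : i = -1 := by omega
      subst hi'
      simp [chainS]
    · have h1 : ¬ (0:ℤ) ≤ i + 1 := by omega
      have h2 : ¬ (0:ℤ) ≤ i := by omega
      have hn : (-i).toNat = (-(i+1)).toNat + 1 := by omega
      rw [chainS, chainS, if_neg h1, if_neg h2, hn, Finset.sum_range_succ]
      have : -(((-(i+1)).toNat : ℤ) + 1) = i := by omega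
      rw [this]
      ring

section
variable {t : ℤ → ℝ} {T : ℝ} (hT : 0 < T) (ht : ∀ i, T ≤ t i)
include hT ht

lemma chainS_add_nat (i : ℤ) (n : ℕ) : chainS t i + n * T ≤ chainS t (i + n) := by
  induction n with
  | zero => simp
  | succ n ih =>
      have h1 : chainS t (i + (n+1) : ℤ) = chainS t (i + n) + t (i + n) := by
        have : (i + (n+1) : ℤ) = (i + n) + 1 := by push_cast; ring
        rw [this, chainS_succ]
      have h2 : (i + ((n:ℕ)+1:ℕ) : ℤ) = i + ((n:ℤ)+1) := by push_cast; ring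
      rw [h2, h1]
      have := ht (i + n)
      push_cast
      push_cast at ih
      linarith

lemma chainS_mono : Monotone (chainS t) := by
  intro i j hij
  have hn : j = i + ((j - i).toNat : ℤ) := by omega
  have := chainS_add_nat hT ht i (j - i).toNat
  rw [← hn] at this
  nlinarith [Nat.cast_nonneg (α := ℝ) (j-i).toNat]

lemma chainS_exists_idx (s : ℝ) : ∃ i : ℤ, chainS t i ≤ s ∧ s < chainS t (i + 1) := by
  obtain ⟨N, hN⟩ := exists_nat_gt ((|s| + 1) / T)
  have hNT : |s| + 1 < N * T := by
    rw [div_lt_iff₀ hT] at hN; linarith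
  have hbdd : ∀ z : ℤ, chainS t z ≤ s → z ≤ N := by
    intro z hz
    by_contra hzN
    push_neg at hzN
    have h1 : chainS t (0 : ℤ) + N * T ≤ chainS t N := by
      simpa using chainS_add_nat hT ht 0 N
    have h2 : chainS t (N : ℤ) ≤ chainS t z := chainS_mono hT ht (by exact_mod_cast hzN.le)
    rw [chainS_zero] at h1
    have := abs_le.mp (le_refl |s|)
    linarith [this.2]
  have hne : ∃ z : ℤ, chainS t z ≤ s := by
    refine ⟨-(N : ℤ), ?_⟩
    have h1 : chainS t (-(N:ℤ)) + N * T ≤ chainS t (-(N:ℤ) + N) := chainS_add_nat hT ht _ N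
    simp only [neg_add_cancel] at h1
    rw [chainS_zero] at h1
    have := abs_le.mp (le_refl |s|)
    linarith [this.1]
  obtain ⟨ub, hub, hmax⟩ := Int.exists_greatest_of_bdd ⟨N, hbdd⟩ hne
  refine ⟨ub, hub, ?_⟩
  by_contra hlt
  push_neg at hlt
  have := hmax (ub + 1) hlt
  omega

lemma chainS_idx_unique {i j : ℤ} {s : ℝ} (hi1 : chainS t i ≤ s) (hi2 : s < chainS t (i+1))
    (hj1 : chainS t j ≤ s) (hj2 : s < chainS t (j+1)) : i = j := by
  by_contra hne
  rcases lt_or_gt_of_ne hne with h | h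
  · have : chainS t (i+1) ≤ chainS t j := chainS_mono hT ht (by omega)
    linarith
  · have : chainS t (j+1) ≤ chainS t i := chainS_mono hT ht (by omega)
    linarith
end

section FlowLemmas
variable {M : Type*} [MetricSpace M] [CompactSpace M] (φ : ℝ → M → M)
variable (hflow_cont : Continuous fun p : ℝ × M => φ p.1 p.2)
    (hflow_zero : ∀ x : M, φ 0 x = x)
    (hflow_add : ∀ s t : ℝ, ∀ x : M, φ (s + t) x = φ s (φ t x))

set_option linter.unusedSectionVars false

include hflow_cont in
lemma flowUC (C ε : ℝ) (hε : 0 < ε) :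
    ∃ δ > 0, ∀ u : ℝ, |u| ≤ C → ∀ p q : M, dist p q ≤ δ → dist (φ u p) (φ u q) ≤ ε := by
  have hcomp : CompactSpace (Set.Icc (-C) C) := isCompact_iff_compactSpace.mp isCompact_Icc
  set f : Set.Icc (-C) C × M → M := fun up => φ up.1.1 up.2 with hf
  have hfc : Continuous f := by
    have : f = (fun p : ℝ × M => φ p.1 p.2) ∘ (fun up : Set.Icc (-C) C × M => ((up.1.1 : ℝ), up.2)) := rfl
    rw [this]
    exact hflow_cont.comp (by continuity)
  have huc : UniformContinuous f := CompactSpace.uniformContinuous_of_continuous hfc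
  rw [Metric.uniformContinuous_iff] at huc
  obtain ⟨δ, hδ, hprop⟩ := huc ε hε
  refine ⟨δ/2, by linarith, ?_⟩
  intro u hu p q hpq
  have humem : u ∈ Set.Icc (-C) C := abs_le.mp hu
  have hd : dist ((⟨⟨u, humem⟩, p⟩ : Set.Icc (-C) C × M)) ⟨⟨u, humem⟩, q⟩ < δ := by
    rw [Prod.dist_eq]
    simp only [Subtype.dist_eq, dist_self]
    have : dist p q < δ := by linarith
    simpa [max_lt_iff, hδ] using this
  have := hprop hd
  exact (this.le)

include hflow_cont hflow_zero in
lemma flowSmall (ε : ℝ) (hε : 0 < ε) :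
    ∃ a > 0, ∀ (p : M) (v : ℝ), |v| ≤ a → dist (φ v p) p ≤ ε := by
  have hcomp : CompactSpace (Set.Icc (-1:ℝ) 1) := isCompact_iff_compactSpace.mp isCompact_Icc
  set f : Set.Icc (-1:ℝ) 1 × M → M := fun up => φ up.1.1 up.2 with hf
  have hfc : Continuous f := by
    have : f = (fun p : ℝ × M => φ p.1 p.2) ∘ (fun up : Set.Icc (-1:ℝ) 1 × M => ((up.1.1 : ℝ), up.2)) := rfl
    rw [this]
    exact hflow_cont.comp (by continuity)
  have huc : UniformContinuous f := CompactSpace.uniformContinuous_of_continuous hfc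
  rw [Metric.uniformContinuous_iff] at huc
  obtain ⟨δ, hδ, hprop⟩ := huc ε hε
  refine ⟨min (δ/2) 1, by positivity, ?_⟩
  intro p v hv
  have hv1 : v ∈ Set.Icc (-1:ℝ) 1 := abs_le.mp (le_trans hv (min_le_right _ _))
  have h0 : (0:ℝ) ∈ Set.Icc (-1:ℝ) 1 := by norm_num
  have hd : dist ((⟨⟨v, hv1⟩, p⟩ : Set.Icc (-1:ℝ) 1 × M)) ⟨⟨0, h0⟩, p⟩ < δ := by
    rw [Prod.dist_eq]
    simp only [Subtype.dist_eq, dist_self]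
    have h1 : |v| < δ := lt_of_le_of_lt (le_trans hv (min_le_left _ _)) (by linarith)
    have h2 : dist v 0 = |v| := by simp [Real.dist_eq]
    rw [max_lt_iff]
    exact ⟨by rw [h2]; exact h1, hδ⟩
  have := hprop hd
  simp only [hf] at this
  rw [hflow_zero p] at this
  exact this.le
include hflow_zero hflow_add in
lemma flow_neg_fix {u : ℝ} {p : M} (h : φ u p = p) : φ (-u) p = p := by
  have : φ (-u) (φ u p) = p := by rw [← hflow_add, neg_add_cancel, hflow_zero]
  rwa [h] at this

include hflow_zero hflow_add in
lemma flow_nat_period {u : ℝ} {p : M} (h : φ u p = p) : ∀ k : ℕ, φ (k * u) p = p := by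
  intro k
  induction k with
  | zero => simpa using hflow_zero p
  | succ k ih =>
      have : ((k:ℝ)+1) * u = u + k * u := by ring
      rw [Nat.cast_add, Nat.cast_one, this, hflow_add, ih, h]

include hflow_cont hflow_zero hflow_add in
lemma exists_noperiod (H : Set M) (hHcomp : IsCompact H)
    (hHnonsing : ∀ p ∈ H, ¬ ∀ τ : ℝ, φ τ p = p) :
    ∃ t0 : ℝ, 0 < t0 ∧ t0 ≤ 1 ∧ ∀ p ∈ H, ∀ u : ℝ, 0 < |u| → |u| ≤ t0 → φ u p ≠ p := by
  by_contra hcon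
  push_neg at hcon
  -- for each n, get a point with a small positive period
  have hseq : ∀ n : ℕ, ∃ p ∈ H, ∃ u : ℝ, 0 < u ∧ u ≤ 1/((n:ℝ)+1) ∧ φ u p = p := by
    intro n
    have hpos : (0:ℝ) < min (1/((n:ℝ)+1)) 1 := by positivity
    obtain ⟨p, hpH, u, hu0, hut, hup⟩ := hcon (min (1/((n:ℝ)+1)) 1) hpos (min_le_right _ _)
    refine ⟨p, hpH, |u|, hu0, le_trans hut (min_le_left _ _), ?_⟩
    rcases abs_cases u with ⟨h1, _⟩ | ⟨h1, _⟩
    · rwa [h1]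
    · rw [h1]; exact flow_neg_fix φ hflow_zero hflow_add hup
  choose p hpH u hu0 hule hup using hseq
  obtain ⟨pinf, hpinfH, σ, hσ, hconv⟩ := hHcomp.tendsto_subseq hpH
  have hfix : ∀ τ : ℝ, φ τ pinf = pinf := by
    have hfixpos : ∀ τ : ℝ, 0 ≤ τ → φ τ pinf = pinf := by
      intro τ hτ
      have hdist : ∀ ε > (0:ℝ), dist (φ τ pinf) pinf ≤ ε := by
        intro ε hε
        obtain ⟨a, ha, hsmall⟩ := flowSmall φ hflow_cont hflow_zero (ε/3) (by linarith)
        obtain ⟨δc, hδc, hUC⟩ := flowUC φ hflow_cont τ (ε/3) (by linarith)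
        -- choose n large
        obtain ⟨N1, hN1⟩ := exists_nat_gt (1/a)
        have hev1 : ∀ᶠ n in Filter.atTop, dist ((p ∘ σ) n) pinf ≤ min δc (ε/3) := by
          have := Metric.tendsto_atTop.mp hconv (min δc (ε/3)) (by positivity)
          obtain ⟨N, hN⟩ := this
          exact Filter.eventually_atTop.mpr ⟨N, fun n hn => (hN n hn).le⟩
        have hev2 : ∀ᶠ n in Filter.atTop, (1:ℝ)/((σ n : ℝ) + 1) ≤ a := by
          refine Filter.eventually_atTop.mpr ⟨N1, fun n hn => ?_⟩
          have hσn : (N1 : ℝ) ≤ σ n := by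
            exact_mod_cast le_trans hn (StrictMono.le_apply hσ)
          rw [div_le_iff₀ (by positivity)]
          rw [div_lt_iff₀ (by positivity)] at hN1
          nlinarith
        obtain ⟨n, h1, h2⟩ := (hev1.and hev2).exists
        set q := p (σ n)
        set v := u (σ n)
        have hv0 : 0 < v := hu0 _
        have hva : v ≤ a := le_trans (hule _) h2
        have hper := hup (σ n)
        -- φ τ q = φ r q with r = τ - v * ⌊τ/v⌋ ∈ [0, v)
        set k : ℕ := ⌊τ / v⌋.toNat with hk
        have hfl0 : 0 ≤ ⌊τ / v⌋ := Int.floor_nonneg.mpr (by positivity)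
        have hkr : (k : ℝ) = (⌊τ / v⌋ : ℤ) := by exact_mod_cast Int.toNat_of_nonneg hfl0
        set r : ℝ := τ - v * k with hr
        have hr0 : 0 ≤ r := by
          rw [hr, hkr, sub_nonneg, mul_comm]
          exact (mul_le_of_le_div₀ (by positivity) hv0.le (Int.floor_le _)).trans_eq rfl
        have hrv : r < v := by
          rw [hr, hkr]
          have := Int.lt_floor_add_one (τ / v)
          have h3 : τ / v < ⌊τ / v⌋ + 1 := this
          rw [div_lt_iff₀ hv0] at h3
          linarith
        have hτq : φ τ q = φ r q := by
          have : τ = r + k * v := by rw [hr]; ring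
          rw [this, hflow_add, flow_nat_period φ hflow_zero hflow_add hper]
        have d1 : dist (φ τ pinf) (φ τ q) ≤ ε/3 := by
          refine hUC τ (by rw [abs_of_nonneg hτ]) _ _ ?_
          rw [dist_comm]
          exact le_trans h1 (min_le_left _ _)
        have d2 : dist (φ τ q) q ≤ ε/3 := by
          rw [hτq]
          exact hsmall q r (by rw [abs_of_nonneg hr0]; linarith)
        have d3 : dist q pinf ≤ ε/3 := le_trans h1 (min_le_right _ _)
        calc dist (φ τ pinf) pinf ≤ dist (φ τ pinf) (φ τ q) + dist (φ τ q) q + dist q pinf :=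
              dist_triangle4 _ _ _ _
          _ ≤ ε/3 + ε/3 + ε/3 := by linarith
          _ = ε := by ring
      have hzero : dist (φ τ pinf) pinf = 0 := by
        by_contra h
        have hpos : 0 < dist (φ τ pinf) pinf := (dist_nonneg).lt_of_ne (Ne.symm h)
        have := hdist (dist (φ τ pinf) pinf / 2) (by linarith)
        linarith
      exact dist_eq_zero.mp hzero
    intro τ
    rcases le_or_gt 0 τ with h | h
    · exact hfixpos τ h
    · have := hfixpos (-τ) (by linarith)
      have h2 := flow_neg_fix φ hflow_zero hflow_add this
      simpa using h2
  exact hHnonsing pinf hpinfH hfix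
include hflow_cont in
lemma exists_band_min (H : Set M) (hHcomp : IsCompact H) (hHne : H.Nonempty)
    (β t0 : ℝ) (hβ : 0 < β) (hβt0 : β ≤ t0)
    (hnoper : ∀ p ∈ H, ∀ u : ℝ, 0 < |u| → |u| ≤ t0 → φ u p ≠ p) :
    ∃ e > 0, ∀ p ∈ H, ∀ v : ℝ, β ≤ |v| → |v| ≤ t0 → e ≤ dist (φ v p) p := by
  set K : Set (ℝ × M) := (Set.Icc (-t0) (-β) ∪ Set.Icc β t0) ×ˢ H with hK
  have hKcomp : IsCompact K := (isCompact_Icc.union isCompact_Icc).prod hHcomp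
  obtain ⟨p0, hp0⟩ := hHne
  have hKne : K.Nonempty := ⟨(t0, p0), Set.mem_prod.mpr ⟨Or.inr ⟨hβt0, le_refl _⟩, hp0⟩⟩
  have hfc : ContinuousOn (fun vp : ℝ × M => dist (φ vp.1 vp.2) vp.2) K :=
    (Continuous.dist hflow_cont continuous_snd).continuousOn
  obtain ⟨⟨v0, q0⟩, hmem, hmin'⟩ := hKcomp.exists_isMinOn hKne hfc
  have hmin : ∀ y ∈ K, dist (φ v0 q0) q0 ≤ dist (φ y.1 y.2) y.2 := fun y hy => hmin' hy
  have hbandv : ∀ v : ℝ, β ≤ |v| → |v| ≤ t0 → v ∈ Set.Icc (-t0) (-β) ∪ Set.Icc β t0 := by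
    intro v h1 h2
    rcases abs_cases v with ⟨hv, _⟩ | ⟨hv, _⟩
    · right; rw [hv] at h1 h2; exact ⟨h1, h2⟩
    · left; rw [hv] at h1 h2; constructor <;> linarith
  have hv0 : β ≤ |v0| ∧ |v0| ≤ t0 := by
    rcases (Set.mem_prod.mp hmem).1 with h | h
    · rw [abs_of_neg (by cases h; linarith)]; exact ⟨by linarith [h.2], by linarith [h.1]⟩
    · rw [abs_of_pos (by cases h; linarith)]; exact ⟨h.1, h.2⟩
  have hq0 : q0 ∈ H := (Set.mem_prod.mp hmem).2
  have hepos : 0 < dist (φ v0 q0) q0 := by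
    rw [dist_pos]
    exact hnoper q0 hq0 v0 (lt_of_lt_of_le hβ hv0.1) hv0.2
  refine ⟨dist (φ v0 q0) q0, hepos, ?_⟩
  intro p hp v h1 h2
  exact hmin (v, p) (Set.mem_prod.mpr ⟨hbandv v h1 h2, hp⟩)
end FlowLemmas

lemma rep_interpolate (g : ℝ → ℝ) (hg0 : g 0 = 0) (a m : ℝ) (ha : 0 < a)
    (hm0 : 0 ≤ m) (hm1 : m < 1)
    (hstep : ∀ j : ℤ, (1-m)*a ≤ g (a*(j+1)) - g (a*j) ∧ g (a*(j+1)) - g (a*j) ≤ (1+m)*a) :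
    ∃ h : ℝ → ℝ, IsRepStar h ∧ (∀ s u : ℝ, s ≠ u → |(h s - h u)/(s-u) - 1| ≤ m) ∧
      (∀ s : ℝ, g (a * ⌊s/a⌋) ≤ h s ∧ h s ≤ g (a * (⌊s/a⌋ + 1))) := by
  set σ : ℤ → ℝ := fun j => (g (a*(j+1)) - g (a*j))/a with hσdef
  have hσlb : ∀ j, 1 - m ≤ σ j := fun j => by
    rw [hσdef]; rw [le_div_iff₀ ha]; linarith [(hstep j).1]
  have hσub : ∀ j, σ j ≤ 1 + m := fun j => by
    rw [hσdef]; rw [div_le_iff₀ ha]; linarith [(hstep j).2]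
  have hσa : ∀ j, σ j * a = g (a*(j+1)) - g (a*j) := fun j => by
    rw [hσdef]; field_simp
  set h : ℝ → ℝ := fun s => g (a * ⌊s/a⌋) + σ ⌊s/a⌋ * (s - a * ⌊s/a⌋) with hhdef
  -- floor facts
  have hfl : ∀ s : ℝ, a * ⌊s/a⌋ ≤ s ∧ s < a * (⌊s/a⌋ + 1) := by
    intro s
    constructor
    · rw [mul_comm]
      exact (le_div_iff₀ ha).mp (Int.floor_le _)
    · rw [mul_comm]
      exact (div_lt_iff₀ ha).mp (by exact_mod_cast Int.lt_floor_add_one (s/a))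
  -- cell identity
  have hcell : ∀ (j : ℤ) (s : ℝ), a*j ≤ s → s ≤ a*(j+1) → h s = g (a*j) + σ j * (s - a*j) := by
    intro j s h1 h2
    rcases eq_or_lt_of_le h2 with heq | hlt
    · have hfloor : ⌊s/a⌋ = j + 1 := by
        rw [heq]
        rw [mul_comm, mul_div_assoc, div_self ha.ne', mul_one]
        exact_mod_cast Int.floor_intCast (R := ℝ) (j+1)
      rw [hhdef]
      simp only [hfloor]
      push_cast
      rw [heq]
      have := hσa j
      push_cast at this ⊢
      linarith [this]
    · have hfloor : ⌊s/a⌋ = j := by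
        rw [Int.floor_eq_iff]
        constructor
        · rw [le_div_iff₀ ha]; linarith
        · rw [div_lt_iff₀ ha]; push_cast; linarith
      rw [hhdef]; simp only [hfloor]
  -- telescope over integers
  have htel : ∀ (j : ℤ) (n : ℕ), (1-m)*(a*n) ≤ g (a*(j+n)) - g (a*j) ∧
      g (a*(j+n)) - g (a*j) ≤ (1+m)*(a*n) := by
    intro j n
    induction n with
    | zero => simp
    | succ n ih =>
        have hs := hstep (j + n)
        push_cast at hs ih ⊢
        ring_nf at hs ih ⊢
        constructor
        · nlinarith [ih.1, hs.1]
        · nlinarith [ih.2, hs.2]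
  clear_value σ h
  -- main two-sided bound
  have L1 : ∀ s u : ℝ, s ≤ u → (1-m)*(u-s) ≤ h u - h s ∧ h u - h s ≤ (1+m)*(u-s) := by
    intro s u hsu
    set j := ⌊s/a⌋ with hj
    set j' := ⌊u/a⌋ with hj'
    have hjj' : j ≤ j' := Int.floor_le_floor (by gcongr)
    rcases eq_or_lt_of_le hjj' with heq | hlt
    · -- same cell
      have e1 : h u = g (a*j) + σ j * (u - a*j) := by
        have := hcell j' u (hfl u).1 (hfl u).2.le
        rwa [← heq] at this
      have e2 : h s = g (a*j) + σ j * (s - a*j) := hcell j s (hfl s).1 (hfl s).2.le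
      have : h u - h s = σ j * (u - s) := by rw [e1, e2]; ring
      rw [this]
      constructor
      · nlinarith [hσlb j]
      · nlinarith [hσub j]
    · -- different cells
      have e1 : h u = g (a*j') + σ j' * (u - a*j') := hcell j' u (hfl u).1 (hfl u).2.le
      have e2 : h s = g (a*j) + σ j * (s - a*j) := hcell j s (hfl s).1 (hfl s).2.le
      set n : ℕ := (j' - (j+1)).toNat with hn
      have hnc : ((j:ℝ)+1) + (n:ℝ) = (j':ℝ) := by
        have : ((j+1) + (n:ℤ) : ℤ) = j' := by omega
        exact_mod_cast congrArg (Int.cast : ℤ → ℝ) this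
      have htel' := htel (j+1) n
      have hmid_lb : (1-m)*(a*n) ≤ g (a*j') - g (a*(j+1)) := by
        have : a*(((j:ℝ)+1)+(n:ℝ)) = a*(j':ℝ) := by rw [hnc]
        rw [← this]
        convert htel'.1 using 3 <;> push_cast <;> ring
      have hmid_ub : g (a*j') - g (a*(j+1)) ≤ (1+m)*(a*n) := by
        have : a*(((j:ℝ)+1)+(n:ℝ)) = a*(j':ℝ) := by rw [hnc]
        rw [← this]
        convert htel'.2 using 3 <;> push_cast <;> ring
      have hd1 : (0:ℝ) ≤ u - a*j' := by linarith [(hfl u).1]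
      have hd3 : (0:ℝ) ≤ a*(j+1) - s := by push_cast; linarith [(hfl s).2]
      have hsplit : h u - h s = σ j' * (u - a*j') + (g (a*j') - g (a*(j+1)))
          + σ j * (a*(j+1) - s) := by
        rw [e1, e2]
        push_cast
        linarith [hσa j]
      have hlen : (u - a*j') + a*(n:ℝ) + (a*(j+1) - s) = u - s := by
        linear_combination a * hnc
      constructor
      · have b1 : (1-m)*(u - a*j') ≤ σ j' * (u - a*j') :=
          mul_le_mul_of_nonneg_right (hσlb j') hd1
        have b3 : (1-m)*(a*(j+1) - s) ≤ σ j * (a*(j+1) - s) :=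
          mul_le_mul_of_nonneg_right (hσlb j) hd3
        push_cast at b1 b3 hsplit hlen hmid_lb ⊢
        have hmlen : m * (u - a*(j':ℝ) + a*(n:ℝ) + (a*((j:ℝ)+1) - s)) = m * (u-s) := by
          rw [hlen]
        linarith [hmid_lb, b1, b3, hsplit, hlen, hmlen]
      · have b1 : σ j' * (u - a*j') ≤ (1+m)*(u - a*j') :=
          mul_le_mul_of_nonneg_right (hσub j') hd1
        have b3 : σ j * (a*(j+1) - s) ≤ (1+m)*(a*(j+1) - s) :=
          mul_le_mul_of_nonneg_right (hσub j) hd3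
        push_cast at b1 b3 hsplit hlen hmid_ub ⊢
        have hmlen : m * (u - a*(j':ℝ) + a*(n:ℝ) + (a*((j:ℝ)+1) - s)) = m * (u-s) := by
          rw [hlen]
        linarith [hmid_ub, b1, b3, hsplit, hlen, hmlen]
  -- derived properties
  have hmono : StrictMono h := by
    intro s u hsu
    have := (L1 s u hsu.le).1
    nlinarith
  have hcont : Continuous h := by
    have hlip : LipschitzWith (Real.toNNReal (1+m)) h := by
      apply LipschitzWith.of_dist_le_mul
      intro s u
      rw [Real.coe_toNNReal _ (by linarith), Real.dist_eq, Real.dist_eq]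
      rcases le_total s u with hle | hle
      · have := (L1 s u hle).2
        have := (L1 s u hle).1
        rw [abs_of_nonpos (by nlinarith), abs_of_nonpos (by linarith)]
        nlinarith
      · have := (L1 u s hle).2
        have := (L1 u s hle).1
        rw [abs_of_nonneg (by nlinarith), abs_of_nonneg (by linarith)]
        nlinarith
    exact hlip.continuous
  have hzero : h 0 = 0 := by
    have : h 0 = g (a*(0:ℤ)) + σ 0 * (0 - a*(0:ℤ)) := hcell 0 0 (by simp) (by push_cast; nlinarith)
    simpa [hg0] using this
  have hsurj : Function.Surjective h := by
    apply Continuous.surjective hcont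
    · apply Filter.tendsto_atTop_mono' _ _ (Filter.Tendsto.const_mul_atTop (by linarith : (0:ℝ) < 1-m) Filter.tendsto_id)
      filter_upwards [Filter.eventually_ge_atTop (0:ℝ)] with s hs
      have := (L1 0 s hs).1
      simp only [id]
      nlinarith [hzero]
    · rw [← Filter.tendsto_neg_atTop_iff]
      apply Filter.tendsto_atTop_mono' _ _ (Filter.Tendsto.const_mul_atTop (by linarith : (0:ℝ) < 1-m) Filter.tendsto_neg_atBot_atTop)
      filter_upwards [Filter.eventually_le_atBot (0:ℝ)] with s hs
      have := (L1 s 0 hs).1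
      nlinarith [hzero]
  have hquot : ∀ s u : ℝ, s ≠ u → |(h s - h u)/(s-u) - 1| ≤ m := by
    intro s u hne
    rcases lt_or_gt_of_ne hne with hlt | hlt
    · have h1 := (L1 s u hlt.le).1
      have h2 := (L1 s u hlt.le).2
      have hpos : 0 < u - s := by linarith
      rw [abs_le]
      have : (h s - h u)/(s-u) = (h u - h s)/(u-s) := by
        rw [div_eq_div_iff (by linarith) (by linarith)]; ring
      rw [this]
      constructor
      · rw [le_sub_iff_add_le, le_div_iff₀ hpos]; nlinarith
      · rw [sub_le_iff_le_add, div_le_iff₀ hpos]; nlinarith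
    · have h1 := (L1 u s hlt.le).1
      have h2 := (L1 u s hlt.le).2
      have hpos : 0 < s - u := by linarith
      rw [abs_le]
      constructor
      · rw [le_sub_iff_add_le, le_div_iff₀ hpos]; nlinarith
      · rw [sub_le_iff_le_add, div_le_iff₀ hpos]; nlinarith
  have hsand : ∀ s : ℝ, g (a * ⌊s/a⌋) ≤ h s ∧ h s ≤ g (a * (⌊s/a⌋ + 1)) := by
    intro s
    set j := ⌊s/a⌋ with hj
    have e : h s = g (a*j) + σ j * (s - a*j) := hcell j s (hfl s).1 (hfl s).2.le
    have hσpos : 0 ≤ σ j := by linarith [hσlb j]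
    have hd : 0 ≤ s - a*j := by linarith [(hfl s).1]
    have hda : s - a*j ≤ a := by push_cast; linarith [(hfl s).2]
    constructor
    · rw [e]; nlinarith
    · rw [e]
      have : σ j * (s - a*j) ≤ σ j * a := mul_le_mul_of_nonneg_left hda hσpos
      have h2 := hσa j
      push_cast at h2 ⊢
      nlinarith
  exact ⟨h, ⟨⟨hcont, hmono, hzero⟩, hsurj⟩, hquot, hsand⟩

set_option maxHeartbeats 2000000

theorem nonsingular_wpotp_implies_spotp {M : Type*} [MetricSpace M] [CompactSpace M]
    (φ : ℝ → M → M)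
    (hflow_cont : Continuous fun p : ℝ × M => φ p.1 p.2)
    (hflow_zero : ∀ x : M, φ 0 x = x)
    (hflow_add : ∀ s t : ℝ, ∀ x : M, φ (s + t) x = φ s (φ t x))
    (H : Set M) (hHcomp : IsCompact H) (hHinv : ∀ τ : ℝ, φ τ '' H = H)
    (hHnonsing : ∀ p ∈ H, ¬ ∀ τ : ℝ, φ τ p = p)
    (hW : WPOTP φ H) : SPOTP φ H := by

  intro ε hε
  by_cases hHne : H.Nonempty
  swap
  · -- H empty: no chains exist
    refine ⟨1, one_pos, 1, one_pos, ?_⟩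
    intro x t hchain
    exact absurd (hchain.1 0) (by rw [Set.not_nonempty_iff_eq_empty.mp hHne]; simp)
  -- Step 1: minimal period lower bound
  obtain ⟨t0, ht0pos, ht0le, hnoper⟩ :=
    exists_noperiod φ hflow_cont hflow_zero hflow_add H hHcomp hHnonsing
  -- Step 2: small-time modulus for ε/2
  obtain ⟨a0, ha0, hsmall⟩ := flowSmall φ hflow_cont hflow_zero (ε/2) (by linarith)
  set a : ℝ := min t0 (a0/2) with ha_def
  have ha : 0 < a := lt_min ht0pos (by linarith)
  have ha1 : a ≤ 1 := le_trans (min_le_left _ _) ht0le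
  have hat0 : a ≤ t0 := min_le_left _ _
  have h2a : 2*a ≤ a0 := by
    have := min_le_right t0 (a0/2); simp only [ha_def]; linarith
  set m : ℝ := min ε 1 / 2 with hm_def
  have hm0 : 0 < m := by
    have : 0 < min ε 1 := lt_min hε one_pos
    simp only [hm_def]; linarith
  have hm1 : m ≤ 1/2 := by
    have : min ε 1 ≤ 1 := min_le_right _ _
    simp only [hm_def]; linarith
  have hmε : m ≤ ε := by
    have h1 : min ε 1 ≤ ε := min_le_left _ _
    simp only [hm_def]; linarith
  set β : ℝ := a * m with hβ_def
  have hβ : 0 < β := mul_pos ha hm0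
  have hβt0 : β ≤ t0 := by
    have : a * m ≤ a * 1 := mul_le_mul_of_nonneg_left (by linarith) ha.le
    simp only [hβ_def]; linarith
  -- Step 3: band minimum
  obtain ⟨e, he, hband⟩ := exists_band_min φ hflow_cont H hHcomp hHne β t0 hβ hβt0 hnoper
  -- Step 4: uniform continuity moduli
  obtain ⟨δ1, hδ1, hUC1⟩ := flowUC φ hflow_cont 2 (e/8) (by linarith)
  obtain ⟨δ2, hδ2, hUC2⟩ := flowUC φ hflow_cont 2 (min (δ1/2) (e/8)) (by positivity)
  set ε' : ℝ := min (min (ε/4) δ2) (min (δ1/2) (e/8)) with hε'_def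
  have hε' : 0 < ε' := by
    apply lt_min (lt_min (by linarith) hδ2) (lt_min (by linarith) (by linarith))
  have hε'ε4 : ε' ≤ ε/4 := le_trans (min_le_left _ _) (min_le_left _ _)
  have hε'δ2 : ε' ≤ δ2 := le_trans (min_le_left _ _) (min_le_right _ _)
  have hε'δ1 : ε' ≤ δ1/2 := le_trans (min_le_right _ _) (min_le_left _ _)
  have hε'e : ε' ≤ e/8 := le_trans (min_le_right _ _) (min_le_right _ _)
  -- Step 5: weak tracing
  obtain ⟨δW, hδW, TW, hTW, hWP⟩ := hW ε' hε'
  refine ⟨min δW δ2, lt_min hδW hδ2, max TW a, lt_of_lt_of_le hTW (le_max_left _ _), ?_⟩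
  intro x t hchain
  obtain ⟨hxH, htT, hδchain⟩ := hchain
  set T : ℝ := max TW a with hT_def
  have hTpos : 0 < T := lt_of_lt_of_le hTW (le_max_left _ _)
  have haT : a ≤ T := le_max_right _ _
  have hchainW : IsChainDT φ H δW TW x t :=
    ⟨hxH, fun i => le_trans (le_max_left _ _) (htT i),
     fun i => le_trans (hδchain i) (min_le_left _ _)⟩
  obtain ⟨z, g, hgRep, hgTrace⟩ := hWP x t hchainW
  obtain ⟨hgcont, hgmono, hg0⟩ := hgRep
  -- chain trajectory
  have hidx := fun s => chainS_exists_idx hTpos htT s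
  choose idx hidxl hidxr using hidx
  set c : ℝ → M := fun s => φ (s - chainS t (idx s)) (x (idx s)) with hc_def
  have hcH : ∀ s, c s ∈ H := by
    intro s
    have h1 : φ (s - chainS t (idx s)) (x (idx s)) ∈ φ (s - chainS t (idx s)) '' H :=
      Set.mem_image_of_mem _ (hxH (idx s))
    rwa [hHinv] at h1
  have hcg : ∀ s, dist (c s) (φ (g s) z) ≤ ε' := fun s =>
    hgTrace (idx s) s (hidxl s) (hidxr s)
  have hceq : ∀ i (s : ℝ), chainS t i ≤ s → s < chainS t (i+1) →
      c s = φ (s - chainS t i) (x i) := by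
    intro i s h1 h2
    have : idx s = i := chainS_idx_unique hTpos htT (hidxl s) (hidxr s) h1 h2
    rw [hc_def]; simp only [this]
  -- propagation lemma
  have hprop : ∀ (s r : ℝ), 0 ≤ r → r ≤ a →
      dist (c (s+r)) (φ r (c s)) ≤ min (δ1/2) (e/8) := by
    intro s r hr0 hra
    set i := idx s with hi
    set j := idx (s+r) with hj
    have hij : i ≤ j := by
      by_contra hcon
      push_neg at hcon
      have h1 : chainS t (j+1) ≤ chainS t i := chainS_mono hTpos htT (by omega)
      have := hidxr (s+r)
      have := hidxl s
      linarith
    have hji : j ≤ i + 1 := by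
      by_contra hcon
      push_neg at hcon
      have h1 : chainS t (i+2) ≤ chainS t j := chainS_mono hTpos htT (by omega)
      have h2 : chainS t (i+2) = chainS t (i+1) + t (i+1) := by
        have : (i+2 : ℤ) = (i+1) + 1 := by ring
        rw [this, chainS_succ]
      have h3 := htT (i+1)
      have h4 := hidxr s
      have h5 := hidxl (s+r)
      linarith
    rcases eq_or_lt_of_le hij with heq | hlt
    · -- same segment
      have : c (s+r) = φ r (c s) := by
        rw [hc_def]
        simp only [← hi, ← hj, ← heq]
        rw [← hflow_add]
        congr 1
        ring
      rw [this, dist_self]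
      positivity
    · -- j = i + 1
      have hj1 : j = i + 1 := by omega
      set τ : ℝ := s + r - chainS t (i+1) with hτ
      have h0 : chainS t (i+1) ≤ s + r := by
        have h0' : chainS t j ≤ s + r := by rw [hj]; exact hidxl (s+r)
        rwa [hj1] at h0'
      have hτ0 : 0 ≤ τ := by rw [hτ]; linarith
      have hτr : τ ≤ r := by
        have := hidxr s
        rw [hτ]
        linarith
      have e1 : c (s+r) = φ τ (x (i+1)) := by
        have h5 : s + r < chainS t ((i+1)+1) := by
          have h6 : s + r < chainS t (j+1) := by rw [hj]; exact hidxr (s+r)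
          rwa [hj1] at h6
        rw [hceq (i+1) (s+r) h0 h5, hτ]
      have hcs : c s = φ (s - chainS t i) (x i) :=
        hceq i s (by rw [hi]; exact hidxl s) (by rw [hi]; exact hidxr s)
      have e2 : φ r (c s) = φ τ (φ (t i) (x i)) := by
        rw [hcs, ← hflow_add, ← hflow_add]
        congr 1
        have hsucc : chainS t (i+1) = chainS t i + t i := chainS_succ t i
        rw [hτ]
        linarith
      rw [e1, e2]
      refine hUC2 τ (by rw [abs_of_nonneg hτ0]; linarith) _ _ ?_
      rw [dist_comm]
      exact le_trans (hδchain i) (min_le_right _ _)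
  -- key increment estimate
  have hstar : ∀ (s r : ℝ), 0 ≤ r → r ≤ a → |g (s+r) - g s - r| ≤ β := by
    have hpt : ∀ (s r : ℝ), 0 ≤ r → r ≤ a →
        ¬ (β ≤ |g (s+r) - g s - r| ∧ |g (s+r) - g s - r| ≤ t0) := by
      rintro s r hr0 hra ⟨hu1, hu2⟩
      set u : ℝ := g (s+r) - g s - r with hu
      set w : M := φ (g s) z with hw
      set q' : M := φ r w with hq'
      set p0 : M := c (s+r) with hp0
      have key1 : φ u q' = φ (g (s+r)) z := by
        rw [hq', hw, ← hflow_add, ← hflow_add]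
        congr 1
        simp only [hu]; ring
      have d1 : dist q' p0 ≤ min (δ1/2) (e/8) + min (δ1/2) (e/8) := by
        calc dist q' p0 ≤ dist (φ r w) (φ r (c s)) + dist (φ r (c s)) (c (s+r)) :=
              dist_triangle _ _ _
          _ ≤ min (δ1/2) (e/8) + min (δ1/2) (e/8) := by
              gcongr
              · refine hUC2 r (by rw [abs_of_nonneg hr0]; linarith) _ _ ?_
                rw [hw, dist_comm]
                exact le_trans (hcg s) hε'δ2
              · rw [dist_comm]
                exact hprop s r hr0 hra
      have d1δ1 : dist q' p0 ≤ δ1 := le_trans d1 (by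
        have := min_le_left (δ1/2) (e/8); linarith)
      have d1e : dist q' p0 ≤ e/4 := le_trans d1 (by
        have := min_le_right (δ1/2) (e/8); linarith)
      have d2 : dist (φ u q') q' ≤ ε' + e/4 := by
        rw [key1]
        calc dist (φ (g (s+r)) z) q' ≤ dist (φ (g (s+r)) z) (c (s+r)) + dist p0 q' :=
              dist_triangle _ _ _
          _ ≤ ε' + e/4 := by
              gcongr
              · rw [dist_comm]; exact hcg (s+r)
              · rw [dist_comm]; exact d1e
      have d3 : dist (φ u p0) (φ u q') ≤ e/8 := by
        refine hUC1 u (le_trans hu2 (by linarith)) _ _ ?_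
        rw [dist_comm]; exact d1δ1
      have hbande : e ≤ dist (φ u p0) p0 := hband p0 (hcH (s+r)) u hu1 hu2
      have : dist (φ u p0) p0 ≤ e/8 + (ε' + e/4) + e/4 := by
        calc dist (φ u p0) p0 ≤ dist (φ u p0) (φ u q') + dist (φ u q') q' + dist q' p0 :=
              dist_triangle4 _ _ _ _
          _ ≤ e/8 + (ε' + e/4) + e/4 := by gcongr
      linarith [hε'e]
    intro s r hr0 hra
    by_contra hcon
    push_neg at hcon
    set F : ℝ → ℝ := fun r' => |g (s+r') - g s - r'| with hF
    have hFcont : ContinuousOn F (Set.Icc 0 r) := by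
      apply Continuous.continuousOn
      apply Continuous.abs
      exact ((hgcont.comp (continuous_const.add continuous_id)).sub continuous_const).sub
        continuous_id
    have hF0 : F 0 = 0 := by simp [hF, hg0]
    have hmem : β ∈ Set.Icc (F 0) (F r) := by
      rw [hF0]
      exact ⟨hβ.le, hcon.le⟩
    obtain ⟨r', hr'mem, hr'β⟩ := intermediate_value_Icc hr0 hFcont hmem
    refine hpt s r' hr'mem.1 (le_trans hr'mem.2 hra) ?_
    have hval : |g (s+r') - g s - r'| = β := hr'β
    rw [hval]
    exact ⟨le_refl _, hβt0⟩
  -- build the piecewise-linear reparametrization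
  have hstep : ∀ j : ℤ, (1-m)*a ≤ g (a*(j+1)) - g (a*j) ∧ g (a*(j+1)) - g (a*j) ≤ (1+m)*a := by
    intro j
    have := hstar (a*j) a (le_of_lt ha) (le_refl a)
    have habs := abs_le.mp this
    have hrw : a*(j:ℝ) + a = a*((j:ℝ)+1) := by ring
    rw [hrw] at habs
    constructor
    · have := habs.1; simp only [hβ_def] at this ⊢; nlinarith
    · have := habs.2; simp only [hβ_def] at this ⊢; nlinarith
  obtain ⟨h, hhstar, hhquot, hhsand⟩ :=
    rep_interpolate g hg0 a m ha hm0.le (by linarith) hstep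
  refine ⟨z, h, ⟨hhstar, fun s u hne2 => le_trans (hhquot s u hne2) hmε⟩, ?_⟩
  -- final tracing estimate
  intro i s hs1 hs2
  have hcs : c s = φ (s - chainS t i) (x i) := hceq i s hs1 hs2
  have hfl1 : a * (⌊s/a⌋:ℝ) ≤ s := by
    rw [mul_comm]; exact (le_div_iff₀ ha).mp (Int.floor_le _)
  have hfl2 : s ≤ a * ((⌊s/a⌋:ℝ) + 1) := by
    rw [mul_comm]
    have := (Int.lt_floor_add_one (s/a)).le
    calc s = (s/a) * a := by field_simp
      _ ≤ ((⌊s/a⌋:ℝ) + 1) * a := by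
          apply mul_le_mul_of_nonneg_right _ ha.le
          exact_mod_cast this
  have hg_between : g (a * (⌊s/a⌋:ℝ)) ≤ g s ∧ g s ≤ g (a * ((⌊s/a⌋:ℝ) + 1)) :=
    ⟨hgmono.monotone hfl1, hgmono.monotone hfl2⟩
  have hgap : g (a * ((⌊s/a⌋:ℝ) + 1)) - g (a * (⌊s/a⌋:ℝ)) ≤ 2*a := by
    have := (hstep ⌊s/a⌋).2
    nlinarith [hm1]
  have hhg : |h s - g s| ≤ 2*a := by
    have h1 := (hhsand s).1
    have h2 := (hhsand s).2
    rw [abs_le]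
    constructor
    · linarith [hg_between.2]
    · linarith [hg_between.1]
  have hsplit : φ (h s) z = φ (h s - g s) (φ (g s) z) := by
    rw [← hflow_add]
    congr 1
    ring
  calc dist (φ (s - chainS t i) (x i)) (φ (h s) z)
      ≤ dist (φ (s - chainS t i) (x i)) (φ (g s) z) + dist (φ (g s) z) (φ (h s) z) :=
        dist_triangle _ _ _
    _ ≤ ε' + ε/2 := by
        gcongr
        · rw [← hcs]; exact hcg s
        · rw [hsplit, dist_comm]
          exact hsmall (φ (g s) z) (h s - g s) (le_trans hhg h2a)
    _ ≤ ε := by linarith [hε'ε4]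
end
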